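/- Let ρ be a positive semidefinite operator on a finite-dimensional Hilbert space 𝒦, P an orthogonal projection on 𝒦, T the swap on 𝒦⊗𝒦, and R_{ii} = (1/2)[I-(-1)^i T][P⊗(I-P)][I-(-1)^i T] for i ∈ {0,1}. Then tr(ρ⊗ρ · R_{11}) - tr(ρ⊗ρ · R_{00}) = ‖[ρ, P]‖²_HS, where ‖·‖_HS is the Hilbert–Schmidt norm. -/
import Mathlib


open Matrix Kronecker ComplexOrder

/-- The swap (exchange) operator on `𝒦 ⊗ 𝒦`. -/
def swapMatrix (m : Type*) [Fintype m] [DecidableEq m] : Matrix (m × m) (m × m) ℂ :=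
  Matrix.of fun p q => if p.1 = q.2 ∧ p.2 = q.1 then 1 else 0

/-- `R_{ij} := (1/2)[I - (-1)^i T][P⊗(I-P)][I - (-1)^j T]`. -/
noncomputable def Rop {m : Type*} [Fintype m] [DecidableEq m]
    (P : Matrix m m ℂ) (i j : Fin 2) : Matrix (m × m) (m × m) ℂ :=
  (2 : ℂ)⁻¹ • ((1 - ((-1 : ℂ)) ^ (i : ℕ) • swapMatrix m) * (P ⊗ₖ (1 - P)) *
    (1 - ((-1 : ℂ)) ^ (j : ℕ) • swapMatrix m))

/-- `tr((A ⊗ B) T) = tr(AB)` for the swap operator `T`. -/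
lemma trace_kron_mul_swap {m : Type*} [Fintype m] [DecidableEq m]
    (A B : Matrix m m ℂ) :
    ((A ⊗ₖ B) * swapMatrix m).trace = (A * B).trace := by
  classical
  simp only [Matrix.trace, Matrix.diag, Matrix.mul_apply, swapMatrix,
    Matrix.kroneckerMap_apply, Matrix.of_apply, Fintype.sum_prod_type, ite_and,
    mul_ite, mul_one, mul_zero]
  refine Finset.sum_congr rfl fun x _ => Finset.sum_congr rfl fun x1 _ => ?_
  rw [Finset.sum_comm]
  simp

/-- `tr(ρ⊗ρ·R₁₁) - tr(ρ⊗ρ·R₀₀) = ‖[ρ,P]‖²_HS`, where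
`‖A‖²_HS = tr(A†A)` is the squared Hilbert–Schmidt norm. -/
theorem trace_Rop_diff_eq_commutator_hs_norm {m : Type*} [Fintype m] [DecidableEq m]
    (ρ : Matrix m m ℂ) (hρ : ρ.PosSemidef)
    (P : Matrix m m ℂ) (hPadj : Pᴴ = P) (hPproj : P * P = P) :
    ((ρ ⊗ₖ ρ) * Rop P 1 1).trace - ((ρ ⊗ₖ ρ) * Rop P 0 0).trace
      = ((ρ * P - P * ρ)ᴴ * (ρ * P - P * ρ)).trace := by
  have hρH : ρᴴ = ρ := hρ.1
  set T := swapMatrix m with hT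
  set Q := P ⊗ₖ ((1 : Matrix m m ℂ) - P) with hQ
  have hR : Rop P 1 1 - Rop P 0 0 = Q * T + T * Q := by
    rw [Rop, Rop]
    simp only [Fin.val_one, Fin.val_zero, pow_one, pow_zero, one_smul, neg_smul,
      sub_neg_eq_add, ← hT, ← hQ]
    rw [← smul_sub]
    have h2 : (1 + T) * Q * (1 + T) - (1 - T) * Q * (1 - T)
        = (Q * T + T * Q) + (Q * T + T * Q) := by noncomm_ring
    rw [h2, smul_add, ← add_smul]
    norm_num
  rw [← Matrix.trace_sub, ← mul_sub, hR, mul_add, Matrix.trace_add]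
  have t1 : ((ρ ⊗ₖ ρ) * (Q * T)).trace = (ρ * P * (ρ * (1 - P))).trace := by
    rw [← mul_assoc, hQ, hT, ← Matrix.mul_kronecker_mul, trace_kron_mul_swap]
  have t2 : ((ρ ⊗ₖ ρ) * (T * Q)).trace = (P * ρ * ((1 - P) * ρ)).trace := by
    rw [Matrix.trace_mul_comm, mul_assoc, Matrix.trace_mul_comm, hQ, hT,
      ← Matrix.mul_kronecker_mul, trace_kron_mul_swap]
  rw [t1, t2]
  simp only [Matrix.conjTranspose_sub, Matrix.conjTranspose_mul, hρH, hPadj]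
  have d1 : (ρ * (P * (P * ρ))).trace = (ρ * (P * ρ)).trace := by
    rw [show P * (P * ρ) = (P * P) * ρ from (mul_assoc _ _ _).symm, hPproj]
  have d2 : (P * (ρ * (ρ * P))).trace = (P * (ρ * ρ)).trace := by
    rw [show P * (ρ * (ρ * P)) = (P * (ρ * ρ)) * P by noncomm_ring, Matrix.trace_mul_comm,
      show P * (P * (ρ * ρ)) = (P * P) * (ρ * ρ) by noncomm_ring, hPproj]
  simp only [mul_sub, sub_mul, mul_one, one_mul, Matrix.trace_sub, mul_assoc]
  linear_combination -d1 - d2
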